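/- There exist universal constants c₀, C₀ ≥ 0 with the following property. Let A be an m×n matrix with entries in [0,1] whose ℓ0-column sparsity Δ₀ satisfies Δ₀ ≥ 2, let c ∈ ℝ_{≥0}^n, and let x ∈ ℝ_{≥0}^n satisfy Ax ≥ 1 componentwise. Set α = ln Δ₀ + ln ln Δ₀ + c₀. Then there exists a random vector z ∈ ℕ^n such that almost surely Az ≥ 1 componentwise and z_j ≤ ⌈α x_j⌉ for every j ∈ [n], and E[⟨c,z⟩] ≤ (α + C₀)·⟨c,x⟩. -/

import Mathlib

open MeasureTheory Finset Real


/-- sum over boolean cube of a product factorizes -/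
lemma sum_pi_bool {n : ℕ} (f : Fin n → Bool → ℝ) :
    ∑ ω : Fin n → Bool, ∏ j, f j (ω j) = ∏ j, (f j true + f j false) := by
  have h := Finset.prod_univ_sum (fun _ : Fin n => (Finset.univ : Finset Bool)) f
  rw [Fintype.piFinset_univ] at h
  simp only [Fintype.sum_bool] at h
  exact h.symm

/-- marginal expectation -/
lemma marginal_bool {n : ℕ} (w : Fin n → Bool → ℝ)
    (hw : ∀ j, w j true + w j false = 1) (j0 : Fin n) (g : Bool → ℝ) :
    ∑ ω : Fin n → Bool, (∏ j, w j (ω j)) * g (ω j0)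
      = w j0 true * g true + w j0 false * g false := by
  have key : ∀ ω : Fin n → Bool,
      (∏ j, w j (ω j)) * g (ω j0)
        = ∏ j, (w j (ω j) * (if j = j0 then g (ω j) else 1)) := by
    intro ω
    rw [Finset.prod_mul_distrib, Finset.prod_ite_eq' Finset.univ j0 (fun j => g (ω j))]
    simp
  calc ∑ ω : Fin n → Bool, (∏ j, w j (ω j)) * g (ω j0)
      = ∑ ω : Fin n → Bool, ∏ j, (w j (ω j) * (if j = j0 then g (ω j) else 1)) := by
        exact Finset.sum_congr rfl (fun ω _ => key ω)
    _ = ∏ j, (w j true * (if j = j0 then g true else 1)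
            + w j false * (if j = j0 then g false else 1)) := by
        exact sum_pi_bool (fun j b => w j b * (if j = j0 then g b else 1))
    _ = w j0 true * g true + w j0 false * g false := by
        rw [Finset.prod_eq_single j0]
        · simp
        · intro b _ hb; simp [hb, hw b]
        · intro h; exact absurd (Finset.mem_univ j0) h


/-- trim: subset with sum in [1,2] -/
lemma trim_lemma {γ : Type*} [DecidableEq γ] (s : Finset γ) (f : γ → ℝ)
    (hf : ∀ j ∈ s, 0 ≤ f j ∧ f j ≤ 1) (h : 1 ≤ ∑ j ∈ s, f j) :
    ∃ T ⊆ s, 1 ≤ ∑ j ∈ T, f j ∧ ∑ j ∈ T, f j ≤ 2 := by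
  induction s using Finset.strongInduction with
  | _ s ih =>
    by_cases h2 : ∑ j ∈ s, f j ≤ 2
    · exact ⟨s, Finset.Subset.refl s, h, h2⟩
    · push_neg at h2
      have hne : s.Nonempty := by
        rcases Finset.eq_empty_or_nonempty s with rfl | h'
        · simp at h2; linarith
        · exact h'
      obtain ⟨a, ha⟩ := hne
      have hsub : s.erase a ⊂ s := Finset.erase_ssubset ha
      have hsum : ∑ j ∈ s.erase a, f j = (∑ j ∈ s, f j) - f a := by
        rw [Finset.sum_erase_eq_sub ha]
      have h1 : 1 ≤ ∑ j ∈ s.erase a, f j := by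
        have := (hf a ha).2; rw [hsum]; linarith
      obtain ⟨T, hT, hT1, hT2⟩ := ih (s.erase a) hsub
        (fun j hj => hf j (Finset.mem_of_mem_erase hj)) h1
      exact ⟨T, hT.trans (Finset.erase_subset a s), hT1, hT2⟩

/-- selection of a cheap fractional sub-cover -/
lemma select_lemma {γ : Type*} [DecidableEq γ] (s : Finset γ) (a c t : γ → ℝ) (α : ℝ)
    (hα : 8 ≤ α)
    (ha : ∀ j ∈ s, 0 ≤ a j ∧ a j ≤ 1) (hc : ∀ j ∈ s, 0 ≤ c j)
    (ht : ∀ j ∈ s, 0 < t j ∧ t j < 1)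
    (hmass : α - 2 ≤ ∑ j ∈ s, a j * t j) :
    ∃ T ⊆ s, 1 ≤ (∑ j ∈ T, a j) ∧ (α - 4) * (∑ j ∈ T, c j) ≤ 4 * ∑ j ∈ s, c j * t j := by
  classical
  set F := ∑ j ∈ s, c j * t j with hF
  have hF0 : 0 ≤ F := Finset.sum_nonneg fun j hj => mul_nonneg (hc j hj) (ht j hj).1.le
  set θ := 2 * F / (α - 4) with hθ
  have hα4 : (0:ℝ) < α - 4 := by linarith
  have hθ0 : 0 ≤ θ := div_nonneg (by linarith) hα4.le
  set T0 := s.filter (fun j => c j ≤ θ * a j) with hT0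
  -- mass of the complement is small
  have hHmass : ∑ j ∈ s.filter (fun j => ¬ (c j ≤ θ * a j)), a j * t j ≤ (α - 4) / 2 := by
    set H := s.filter (fun j => ¬ (c j ≤ θ * a j)) with hH
    have hsubH : H ⊆ s := Finset.filter_subset _ _
    have h1 : θ * ∑ j ∈ H, a j * t j ≤ ∑ j ∈ H, c j * t j := by
      rw [Finset.mul_sum]
      refine Finset.sum_le_sum fun j hj => ?_
      have hj' := Finset.mem_filter.mp hj
      have h2 : θ * a j ≤ c j := le_of_not_ge hj'.2
      have := (ht j (hj'.1)).1.le
      calc θ * (a j * t j) = (θ * a j) * t j := by ring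
        _ ≤ c j * t j := mul_le_mul_of_nonneg_right h2 this
    have h2 : ∑ j ∈ H, c j * t j ≤ F := by
      refine Finset.sum_le_sum_of_subset_of_nonneg hsubH fun j hj _ =>
        mul_nonneg (hc j hj) (ht j hj).1.le
    by_cases hFz : F = 0
    · -- then H is empty-ish: each term is 0
      have : ∀ j ∈ H, a j * t j = 0 := by
        intro j hj
        have hj' := Finset.mem_filter.mp hj
        have hcj : θ * a j < c j := lt_of_not_ge hj'.2
        have h0 : 0 ≤ θ * a j := mul_nonneg hθ0 (ha j hj'.1).1
        have hcj0 : 0 < c j := lt_of_le_of_lt h0 hcj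
        -- c j * t j ≤ F = 0 and nonneg, so = 0, so t j = 0 contradiction... gives a contradiction
        have hterm : c j * t j = 0 := by
          have hle : c j * t j ≤ 0 := by
            have h5 : c j * t j ≤ F := Finset.single_le_sum (f := fun j => c j * t j)
              (fun k hk => mul_nonneg (hc k hk) (ht k hk).1.le) (hsubH hj)
            linarith
          have hge : 0 ≤ c j * t j := mul_nonneg (hc j hj'.1) (ht j hj'.1).1.le
          linarith
        have := (ht j hj'.1).1
        nlinarith
      rw [Finset.sum_congr rfl this]
      simp; linarith
    · have hFpos : 0 < F := lt_of_le_of_ne hF0 (Ne.symm hFz)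
      have hθpos : 0 < θ := div_pos (by linarith) hα4
      have : ∑ j ∈ H, a j * t j ≤ F / θ := by
        rw [le_div_iff₀ hθpos]
        calc (∑ j ∈ H, a j * t j) * θ = θ * ∑ j ∈ H, a j * t j := by ring
          _ ≤ ∑ j ∈ H, c j * t j := h1
          _ ≤ F := h2
      have hFθ : F / θ = (α - 4) / 2 := by
        rw [hθ]; field_simp
      linarith [hFθ ▸ this]
  -- T0 has mass ≥ 1
  have hT0mass : 1 ≤ ∑ j ∈ T0, a j := by
    have hsplit : ∑ j ∈ s, a j * t j
        = ∑ j ∈ T0, a j * t j + ∑ j ∈ s.filter (fun j => ¬ (c j ≤ θ * a j)), a j * t j := by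
      rw [hT0]; exact (Finset.sum_filter_add_sum_filter_not s _ _).symm
    have h1 : α / 2 ≤ ∑ j ∈ T0, a j * t j := by
      have := hmass; rw [hsplit] at this; linarith [hHmass]
    have h2 : ∑ j ∈ T0, a j * t j ≤ ∑ j ∈ T0, a j := by
      refine Finset.sum_le_sum fun j hj => ?_
      have hjs := Finset.mem_filter.mp hj |>.1
      have := ht j hjs
      nlinarith [(ha j hjs).1]
    linarith
  -- trim T0
  obtain ⟨T, hTsub, hT1, hT2⟩ := trim_lemma T0 a
    (fun j hj => ha j (Finset.mem_filter.mp hj |>.1)) hT0mass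
  refine ⟨T, hTsub.trans (Finset.filter_subset _ _), hT1, ?_⟩
  have hcost : ∑ j ∈ T, c j ≤ θ * ∑ j ∈ T, a j := by
    rw [Finset.mul_sum]
    exact Finset.sum_le_sum fun j hj => (Finset.mem_filter.mp (hTsub hj)).2
  have h2θ : θ * ∑ j ∈ T, a j ≤ 2 * θ := by
    have := mul_le_mul_of_nonneg_left hT2 hθ0
    linarith
  have : (α - 4) * (2 * θ) = 4 * F := by
    rw [hθ]; field_simp; ring
  calc (α - 4) * ∑ j ∈ T, c j ≤ (α - 4) * (2 * θ) := by
        apply mul_le_mul_of_nonneg_left _ hα4.le; linarith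
    _ = 4 * F := this
    _ = 4 * ∑ j ∈ s, c j * t j := by rw [hF]


/-- convexity: exp(-(s*A)) ≤ 1 - A + A exp(-s) for A ∈ [0,1] -/
lemma exp_convex_bound (s A : ℝ) (hA0 : 0 ≤ A) (hA1 : A ≤ 1) :
    Real.exp (-(s * A)) ≤ 1 - A + A * Real.exp (-s) := by
  have h := convexOn_exp.2 (Set.mem_univ (0:ℝ)) (Set.mem_univ (-s))
    (by linarith : (0:ℝ) ≤ 1 - A) hA0 (by ring)
  simp only [smul_eq_mul, mul_zero, zero_add, Real.exp_zero, mul_one] at h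
  calc Real.exp (-(s * A)) = Real.exp ((1 - A) * 0 + A * (-s)) := by ring_nf
    _ ≤ (1 - A) * 1 + A * Real.exp (-s) := by
        have h := convexOn_exp.2 (Set.mem_univ (0:ℝ)) (Set.mem_univ (-s))
          (by linarith : (0:ℝ) ≤ 1 - A) hA0 (by ring)
        simpa using h
    _ = 1 - A + A * Real.exp (-s) := by ring

/-- per-coordinate mgf factor bound -/
lemma factor_bound (s A p fl cl : ℝ) (hs : 0 ≤ s) (hA0 : 0 ≤ A) (hA1 : A ≤ 1)
    (hp0 : 0 ≤ p) (hp1 : p ≤ 1) (hfl : 0 ≤ fl) (hcl : p ≠ 0 → cl = fl + 1) :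
    p * Real.exp (-(s * (A * cl))) + (1 - p) * Real.exp (-(s * (A * fl)))
      ≤ Real.exp (-((1 - Real.exp (-s)) * (A * (fl + p)))) := by
  have hes : Real.exp (-s) ≤ 1 := Real.exp_le_one_iff.mpr (by linarith)
  have h1e : 1 - Real.exp (-s) ≤ s := by
    have := Real.add_one_le_exp (-s); linarith
  have h1e0 : 0 ≤ 1 - Real.exp (-s) := by linarith
  by_cases hp : p = 0
  · subst hp
    simp only [zero_mul, sub_zero, one_mul, zero_add, add_zero]
    apply Real.exp_le_exp.mpr
    have : (1 - Real.exp (-s)) * (A * fl) ≤ s * (A * fl) :=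
      mul_le_mul_of_nonneg_right h1e (mul_nonneg hA0 hfl)
    linarith
  · have hcl' := hcl hp
    subst hcl'
    have key1 : p * Real.exp (-(s * A)) + (1 - p) ≤ 1 - p * A * (1 - Real.exp (-s)) := by
      have := exp_convex_bound s A hA0 hA1
      nlinarith
    have key2 : 1 - p * A * (1 - Real.exp (-s)) ≤ Real.exp (-(p * A * (1 - Real.exp (-s)))) := by
      have := Real.add_one_le_exp (-(p * A * (1 - Real.exp (-s)))); linarith
    have hflb : Real.exp (-(s * (A * fl))) ≤ Real.exp (-((1 - Real.exp (-s)) * (A * fl))) := by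
      apply Real.exp_le_exp.mpr
      have : (1 - Real.exp (-s)) * (A * fl) ≤ s * (A * fl) :=
        mul_le_mul_of_nonneg_right h1e (mul_nonneg hA0 hfl)
      linarith
    have expand : p * Real.exp (-(s * (A * (fl + 1)))) + (1 - p) * Real.exp (-(s * (A * fl)))
        = Real.exp (-(s * (A * fl))) * (p * Real.exp (-(s * A)) + (1 - p)) := by
      rw [show -(s * (A * (fl + 1))) = -(s * (A * fl)) + -(s * A) by ring, Real.exp_add]
      ring
    rw [expand]
    have hpos : (0:ℝ) ≤ Real.exp (-(s * (A * fl))) := (Real.exp_pos _).le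
    have step1 : Real.exp (-(s * (A * fl))) * (p * Real.exp (-(s * A)) + (1 - p))
        ≤ Real.exp (-(s * (A * fl))) * Real.exp (-(p * A * (1 - Real.exp (-s)))) := by
      apply mul_le_mul_of_nonneg_left _ hpos
      exact key1.trans key2
    refine step1.trans ?_
    rw [← Real.exp_add]
    apply Real.exp_le_exp.mpr
    have : (1 - Real.exp (-s)) * (A * fl) ≤ s * (A * fl) :=
      mul_le_mul_of_nonneg_right h1e (mul_nonneg hA0 hfl)
    nlinarith

open Real

lemma ceil_eq_floor_add_one_of_frac {t' : ℝ} (ht' : 0 ≤ t') (h : t' - ⌊t'⌋₊ ≠ 0) :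
    (⌈t'⌉₊ : ℝ) = (⌊t'⌋₊ : ℝ) + 1 := by
  have hlt : (⌊t'⌋₊ : ℝ) < t' :=
    lt_of_le_of_ne (Nat.floor_le ht') (fun he => h (by rw [he] at h ⊢; linarith))
  have h1 : ⌊t'⌋₊ < ⌈t'⌉₊ := Nat.lt_ceil.mpr hlt
  have h2 : ⌈t'⌉₊ ≤ ⌊t'⌋₊ + 1 := Nat.ceil_le_floor_add_one t'
  have h3 : ⌈t'⌉₊ = ⌊t'⌋₊ + 1 := le_antisymm h2 h1
  exact_mod_cast congrArg (Nat.cast : ℕ → ℝ) h3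

lemma pceil {t' : ℝ} (ht' : 0 ≤ t') :
    (t' - ⌊t'⌋₊) * (⌈t'⌉₊ : ℝ) + (1 - (t' - ⌊t'⌋₊)) * (⌊t'⌋₊ : ℝ) = t' := by
  by_cases h : t' - ⌊t'⌋₊ = 0
  · rw [h]; have : (⌊t'⌋₊ : ℝ) = t' := by linarith
    rw [this]; ring
  · rw [ceil_eq_floor_add_one_of_frac ht' h]; ring



set_option maxHeartbeats 2000000 in
/-- randomized rounding with alteration for ℓ0-column-sparse
covering programs (Theorem `l0-alteration`). -/
theorem stmt_0 :
    ∃ c₀ C₀ : ℝ, 0 ≤ c₀ ∧ 0 ≤ C₀ ∧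
      ∀ (m n : ℕ) (A : Fin m → Fin n → ℝ) (c x : Fin n → ℝ) (Δ₀ : ℕ) (α : ℝ),
        (∀ i j, A i j ∈ Set.Icc (0 : ℝ) 1) →
        (∀ j, 0 ≤ c j) → (∀ j, 0 ≤ x j) →
        (∀ i, 1 ≤ ∑ j, A i j * x j) →
        Δ₀ = (Finset.univ.sup fun j : Fin n =>
          (Finset.univ.filter fun i : Fin m => A i j ≠ 0).card) →
        2 ≤ Δ₀ →
        α = Real.log Δ₀ + Real.log (Real.log Δ₀) + c₀ →
        ∃ (Ω : Type) (_ : MeasureSpace Ω) (z : Ω → Fin n → ℕ),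
          IsProbabilityMeasure (volume : Measure Ω) ∧
          Measurable z ∧
          (∀ᵐ ω ∂(volume : Measure Ω),
            (∀ i, 1 ≤ ∑ j, A i j * (z ω j : ℝ)) ∧ ∀ j, z ω j ≤ ⌈α * x j⌉₊) ∧
          ∫⁻ ω, ENNReal.ofReal (∑ j, c j * (z ω j : ℝ)) ≤
            ENNReal.ofReal ((α + C₀) * ∑ j, c j * x j) := by
  classical
  refine ⟨8, 100, by norm_num, by norm_num, ?_⟩
  intro m n A c x Δ₀ α hA hc hx hAx hΔdef hΔ2 hα
  -- numeric preliminaries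
  have hΔR : (2:ℝ) ≤ (Δ₀:ℝ) := by exact_mod_cast hΔ2
  have hΔpos : (0:ℝ) < (Δ₀:ℝ) := by linarith
  have hlog2 : (0.6931:ℝ) ≤ Real.log Δ₀ := by
    have h1 : Real.log 2 ≤ Real.log Δ₀ := Real.log_le_log (by norm_num) hΔR
    have := Real.log_two_gt_d9
    linarith
  have hlogpos : 0 < Real.log Δ₀ := by linarith
  have hloglog : (-0.45:ℝ) ≤ Real.log (Real.log Δ₀) := by
    have h1 : 1 - (Real.log Δ₀)⁻¹ ≤ Real.log (Real.log Δ₀) :=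
      Real.one_sub_inv_le_log_of_pos hlogpos
    have h2 : (Real.log Δ₀)⁻¹ ≤ (0.6931:ℝ)⁻¹ := by
      apply inv_anti₀ (by norm_num) hlog2
    have h3 : ((0.6931:ℝ))⁻¹ ≤ 1.45 := by norm_num
    linarith
  have hα8 : (8:ℝ) ≤ α := by rw [hα]; linarith
  have hα0 : (0:ℝ) < α := by linarith
  have hloglogup : Real.log (Real.log Δ₀) ≤ Real.log Δ₀ := Real.log_le_self hlogpos.le
  have hα14 : α ≤ 14 * Real.log Δ₀ := by
    rw [hα]
    have : (8:ℝ) ≤ 12 * Real.log Δ₀ := by linarith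
    linarith
  have hexpα : Real.exp α = Δ₀ * Real.log Δ₀ * Real.exp 8 := by
    rw [hα, Real.exp_add, Real.exp_add, Real.exp_log hΔpos, Real.exp_log hlogpos]
  -- local definitions
  set t : Fin n → ℝ := fun j => α * x j with htdef
  have ht0 : ∀ j, 0 ≤ t j := fun j => mul_nonneg hα0.le (hx j)
  set p : Fin n → ℝ := fun j => t j - ⌊t j⌋₊ with hpdef
  have hp0 : ∀ j, 0 ≤ p j := fun j => by
    have := Nat.floor_le (ht0 j); simp only [hpdef]; linarith
  have hp1 : ∀ j, p j ≤ 1 := fun j => by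
    have := Nat.lt_floor_add_one (t j); simp only [hpdef]; linarith
  set w : Fin n → Bool → ℝ := fun j b => if b then p j else 1 - p j with hwdef
  have hw1 : ∀ j, w j true + w j false = 1 := fun j => by simp [hwdef]
  have hwnn : ∀ j b, 0 ≤ w j b := by
    intro j b
    cases b
    · have := hp1 j; simp only [hwdef]; simpa using by linarith
    · have := hp0 j; simpa [hwdef] using this
  set W : (Fin n → Bool) → ℝ := fun ω => ∏ j, w j (ω j) with hWdef
  have hWnn : ∀ ω, 0 ≤ W ω := fun ω => Finset.prod_nonneg fun j _ => hwnn j (ω j)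
  have hWsum : ∑ ω : Fin n → Bool, W ω = 1 := by
    rw [hWdef]
    rw [sum_pi_bool w]
    rw [Finset.prod_congr rfl (fun j _ => hw1 j)]
    simp
  set base : (Fin n → Bool) → Fin n → ℕ := fun ω j => if ω j then ⌈t j⌉₊ else ⌊t j⌋₊
    with hbasedef
  have hbase_le : ∀ ω j, base ω j ≤ ⌈t j⌉₊ := by
    intro ω j
    by_cases h : ω j <;> simp [hbasedef, h, Nat.floor_le_ceil]
  have hbase_ge : ∀ ω j, (⌊t j⌋₊:ℝ) ≤ (base ω j : ℝ) := by
    intro ω j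
    by_cases h : ω j <;> simp [hbasedef, h]
    exact_mod_cast Nat.floor_le_ceil (t j)
  -- row masses
  have hrow : ∀ i, α ≤ ∑ j, A i j * t j := by
    intro i
    have h1 : ∑ j, A i j * t j = α * ∑ j, A i j * x j := by
      rw [Finset.mul_sum]
      exact Finset.sum_congr rfl fun j _ => by rw [htdef]; ring
    rw [h1]
    nlinarith [hAx i]
  -- selection of cheap covers
  have hTsel : ∀ i, ∃ T : Finset (Fin n),
      (∀ j ∈ T, 0 < t j) ∧
      (α - 4) * (∑ j ∈ T, c j)
        ≤ 4 * (α * ∑ j ∈ Finset.univ.filter (fun j => A i j ≠ 0), c j * x j) ∧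
      ((∑ j, A i j * (⌊t j⌋₊:ℝ)) < 1 → 1 ≤ ∑ j ∈ T, A i j) := by
    intro i
    by_cases hD : (∑ j, A i j * (⌊t j⌋₊:ℝ)) < 1
    · set S := Finset.univ.filter (fun j => A i j ≠ 0 ∧ 0 < t j ∧ t j < 1) with hSdef
      have hmass : α - 2 ≤ ∑ j ∈ S, A i j * t j := by
        have hsplit : ∑ j ∈ S, A i j * t j
            + ∑ j ∈ Finset.univ.filter (fun j => ¬(A i j ≠ 0 ∧ 0 < t j ∧ t j < 1)), A i j * t j
            = ∑ j, A i j * t j := by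
          rw [hSdef]
          exact Finset.sum_filter_add_sum_filter_not _ _ _
        have hnotS : ∑ j ∈ Finset.univ.filter (fun j => ¬(A i j ≠ 0 ∧ 0 < t j ∧ t j < 1)),
            A i j * t j ≤ 2 * ∑ j, A i j * (⌊t j⌋₊:ℝ) := by
          have step : ∀ j ∈ Finset.univ.filter (fun j => ¬(A i j ≠ 0 ∧ 0 < t j ∧ t j < 1)),
              A i j * t j ≤ 2 * (A i j * (⌊t j⌋₊:ℝ)) := by
            intro j hj
            have hj' := (Finset.mem_filter.mp hj).2
            have hA0 := (hA i j).1
            by_cases hz : A i j = 0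
            · simp [hz]
            · rcases lt_or_ge (t j) 1 with hlt | hge
              · -- then t j ≤ 0, so t j = 0
                have ht00 : t j = 0 := by
                  rcases lt_trichotomy (t j) 0 with h' | h' | h'
                  · exact absurd h' (not_lt.mpr (ht0 j))
                  · exact h'
                  · exact absurd ⟨hz, h', hlt⟩ hj'
                rw [ht00]
                have : (⌊(0:ℝ)⌋₊ : ℝ) = 0 := by simp
                simp [this]
              · -- t j ≥ 1 : floor ≥ 1 and t < floor + 1 ≤ 2 floor
                have hfl1 : (1:ℝ) ≤ (⌊t j⌋₊:ℝ) := by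
                  have : 1 ≤ ⌊t j⌋₊ := Nat.le_floor (by exact_mod_cast hge)
                  exact_mod_cast this
                have := Nat.lt_floor_add_one (t j)
                nlinarith
          calc ∑ j ∈ Finset.univ.filter (fun j => ¬(A i j ≠ 0 ∧ 0 < t j ∧ t j < 1)), A i j * t j
              ≤ ∑ j ∈ Finset.univ.filter (fun j => ¬(A i j ≠ 0 ∧ 0 < t j ∧ t j < 1)),
                  2 * (A i j * (⌊t j⌋₊:ℝ)) := Finset.sum_le_sum step
            _ ≤ ∑ j, 2 * (A i j * (⌊t j⌋₊:ℝ)) := by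
                refine Finset.sum_le_sum_of_subset_of_nonneg (Finset.subset_univ _)
                  fun j _ _ => mul_nonneg (by norm_num) (mul_nonneg (hA i j).1 (Nat.cast_nonneg _))
            _ = 2 * ∑ j, A i j * (⌊t j⌋₊:ℝ) := by rw [Finset.mul_sum]
        have := hrow i
        linarith
      obtain ⟨T, hTsub, hTA, hTc⟩ := select_lemma S (A i) c t α hα8
        (fun j _ => ⟨(hA i j).1, (hA i j).2⟩) (fun j _ => hc j)
        (fun j hj => (Finset.mem_filter.mp hj).2.2) hmass
      refine ⟨T, fun j hj => ((Finset.mem_filter.mp (hTsub hj)).2.2.1), ?_, fun _ => hTA⟩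
      have h1 : ∑ j ∈ S, c j * t j = α * ∑ j ∈ S, c j * x j := by
        rw [Finset.mul_sum]
        exact Finset.sum_congr rfl fun j _ => by rw [htdef]; ring
      have h2 : ∑ j ∈ S, c j * x j
          ≤ ∑ j ∈ Finset.univ.filter (fun j => A i j ≠ 0), c j * x j := by
        refine Finset.sum_le_sum_of_subset_of_nonneg ?_
          (fun j _ _ => mul_nonneg (hc j) (hx j))
        intro j hj
        exact Finset.mem_filter.mpr ⟨Finset.mem_univ j, (Finset.mem_filter.mp hj).2.1⟩
      have h3 := mul_le_mul_of_nonneg_left h2 hα0.le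
      calc (α - 4) * (∑ j ∈ T, c j) ≤ 4 * ∑ j ∈ S, c j * t j := hTc
        _ = 4 * (α * ∑ j ∈ S, c j * x j) := by rw [h1]
        _ ≤ 4 * (α * ∑ j ∈ Finset.univ.filter (fun j => A i j ≠ 0), c j * x j) := by linarith
    · refine ⟨∅, by simp, ?_, fun h => absurd h hD⟩
      have : 0 ≤ ∑ j ∈ Finset.univ.filter (fun j => A i j ≠ 0), c j * x j :=
        Finset.sum_nonneg fun j _ => mul_nonneg (hc j) (hx j)
      simp only [Finset.sum_empty, mul_zero]
      positivity
  choose T hTpos hTcost hTcov using hTsel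
  -- the random vector
  set X : Fin m → (Fin n → Bool) → ℝ := fun i ω => ∑ j, A i j * (base ω j : ℝ) with hXdef
  set fixI : (Fin n → Bool) → Fin n → ℕ :=
    fun ω j => if (∃ i, X i ω < 1 ∧ j ∈ T i) then 1 else 0 with hfixdef
  set z : (Fin n → Bool) → Fin n → ℕ := fun ω j => max (base ω j) (fixI ω j) with hzdef
  -- feasibility
  have hzbase : ∀ ω j, (base ω j : ℝ) ≤ (z ω j : ℝ) := by
    intro ω j
    exact_mod_cast le_max_left _ _
  have hfeas : ∀ ω, ∀ i, 1 ≤ ∑ j, A i j * (z ω j : ℝ) := by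
    intro ω i
    by_cases hf : X i ω < 1
    · have hD : ∑ j, A i j * (⌊t j⌋₊:ℝ) < 1 := by
        refine lt_of_le_of_lt (Finset.sum_le_sum fun j _ => ?_) hf
        exact mul_le_mul_of_nonneg_left (hbase_ge ω j) (hA i j).1
      have hT1 := hTcov i hD
      have hz1 : ∀ j ∈ T i, (1:ℝ) ≤ (z ω j : ℝ) := by
        intro j hj
        have hfix : fixI ω j = 1 := by
          simp only [hfixdef]; exact if_pos ⟨i, hf, hj⟩
        have h1 : 1 ≤ z ω j := by
          simp only [hzdef]
          exact le_trans (le_of_eq hfix.symm) (le_max_right _ _)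
        exact_mod_cast h1
      calc (1:ℝ) ≤ ∑ j ∈ T i, A i j := hT1
        _ ≤ ∑ j ∈ T i, A i j * (z ω j : ℝ) := by
            refine Finset.sum_le_sum fun j hj => ?_
            nlinarith [hz1 j hj, (hA i j).1]
        _ ≤ ∑ j, A i j * (z ω j : ℝ) := by
            refine Finset.sum_le_sum_of_subset_of_nonneg (Finset.subset_univ _)
              fun j _ _ => mul_nonneg (hA i j).1 (Nat.cast_nonneg _)
    · push_neg at hf
      calc (1:ℝ) ≤ X i ω := hf
        _ = ∑ j, A i j * (base ω j : ℝ) := by simp only [hXdef]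
        _ ≤ ∑ j, A i j * (z ω j : ℝ) := by
            refine Finset.sum_le_sum fun j _ => ?_
            exact mul_le_mul_of_nonneg_left (hzbase ω j) (hA i j).1
  have hzle : ∀ ω j, z ω j ≤ ⌈α * x j⌉₊ := by
    intro ω j
    have heq : α * x j = t j := rfl
    rw [heq]
    have h2 : fixI ω j ≤ ⌈t j⌉₊ := by
      by_cases h : (∃ i, X i ω < 1 ∧ j ∈ T i)
      · obtain ⟨i, _, hj⟩ := h
        have htj : 0 < t j := hTpos i j hj
        have hceil : 1 ≤ ⌈t j⌉₊ := by
          have : 0 < ⌈t j⌉₊ := Nat.lt_ceil.mpr (by exact_mod_cast htj)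
          omega
        calc fixI ω j ≤ 1 := by simp only [hfixdef]; split <;> omega
          _ ≤ ⌈t j⌉₊ := hceil
      · simp only [hfixdef, h, if_false]; exact Nat.zero_le _
    exact max_le (hbase_le ω j) h2
  -- the measure
  letI : MeasurableSpace (Fin n → Bool) := ⊤
  set μ : Measure (Fin n → Bool) :=
    Measure.sum (fun ω : Fin n → Bool => (ENNReal.ofReal (W ω)) • Measure.dirac ω) with hμdef
  have hμprob : IsProbabilityMeasure μ := by
    constructor
    rw [hμdef, Measure.sum_apply _ MeasurableSet.univ, tsum_fintype]
    have h1 : ∀ ω : Fin n → Bool,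
        ((ENNReal.ofReal (W ω)) • Measure.dirac ω) Set.univ = ENNReal.ofReal (W ω) := by
      intro ω
      simp [Measure.dirac_apply' _ MeasurableSet.univ]
    rw [Finset.sum_congr rfl (fun ω _ => h1 ω),
      ← ENNReal.ofReal_sum_of_nonneg (fun ω _ => hWnn ω), hWsum]
    simp
  -- main expectation bound (real version)
  have hEmain : ∑ ω : Fin n → Bool, W ω * (∑ j, c j * (z ω j : ℝ))
      ≤ (α + 100) * ∑ j, c j * x j := by
    set K : Fin m → ℝ := fun i => ∑ j ∈ T i, c j with hKdef
    have hKnn : ∀ i, 0 ≤ K i := fun i => Finset.sum_nonneg fun j _ => hc j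
    have hcx : 0 ≤ ∑ j, c j * x j :=
      Finset.sum_nonneg fun j _ => mul_nonneg (hc j) (hx j)
    have hpoint : ∀ ω, (∑ j, c j * (z ω j:ℝ))
        ≤ (∑ j, c j * (base ω j:ℝ)) + ∑ i, (if X i ω < 1 then K i else 0) := by
      intro ω
      have h1 : ∀ j, (z ω j : ℝ) ≤ (base ω j:ℝ) + (fixI ω j:ℝ) := by
        intro j
        have : z ω j ≤ base ω j + fixI ω j := by
          simp only [hzdef]
          exact max_le (Nat.le_add_right _ _) (Nat.le_add_left _ _)
        exact_mod_cast this
      have h2 : ∑ j, c j * (fixI ω j:ℝ) ≤ ∑ i, (if X i ω < 1 then K i else 0) := by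
        calc ∑ j, c j * (fixI ω j:ℝ)
            ≤ ∑ j, ∑ i, (if X i ω < 1 ∧ j ∈ T i then c j else 0) := by
              refine Finset.sum_le_sum fun j _ => ?_
              by_cases h : (∃ i, X i ω < 1 ∧ j ∈ T i)
              · obtain ⟨i0, hi0⟩ := h
                have hfix : fixI ω j = 1 := by
                  simp only [hfixdef]; exact if_pos ⟨i0, hi0⟩
                rw [hfix]
                have hsingle := Finset.single_le_sum
                  (f := fun i => if X i ω < 1 ∧ j ∈ T i then c j else 0)
                  (fun i _ => by by_cases hh : X i ω < 1 ∧ j ∈ T i <;> simp [hh, hc j])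
                  (Finset.mem_univ i0)
                simp only [hi0, if_true, and_self] at hsingle
                simpa using hsingle
              · have hfix : fixI ω j = 0 := by
                  simp only [hfixdef]; exact if_neg h
                rw [hfix]
                refine le_trans (by simp) (Finset.sum_nonneg fun i _ => ?_)
                by_cases hh : X i ω < 1 ∧ j ∈ T i <;> simp [hh, hc j]
          _ = ∑ i, ∑ j, (if X i ω < 1 ∧ j ∈ T i then c j else 0) := Finset.sum_comm
          _ = ∑ i, (if X i ω < 1 then K i else 0) := by
              refine Finset.sum_congr rfl fun i _ => ?_
              by_cases h : X i ω < 1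
              · simp only [h, true_and, if_true]
                rw [hKdef]
                rw [Finset.sum_ite_mem]
                rw [Finset.univ_inter]
              · simp [h]
      have h3 : ∑ j, c j * (z ω j:ℝ)
          ≤ ∑ j, (c j * (base ω j:ℝ) + c j * (fixI ω j:ℝ)) := by
        refine Finset.sum_le_sum fun j _ => ?_
        have := h1 j
        nlinarith [hc j]
      rw [Finset.sum_add_distrib] at h3
      linarith
    have hEbase : ∑ ω : Fin n → Bool, W ω * (∑ j, c j * (base ω j:ℝ))
        = α * ∑ j, c j * x j := by
      have swap : ∑ ω : Fin n → Bool, W ω * (∑ j, c j * (base ω j:ℝ))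
          = ∑ j, c j * ∑ ω : Fin n → Bool, W ω * (base ω j:ℝ) := by
        simp_rw [Finset.mul_sum]
        rw [Finset.sum_comm]
        refine Finset.sum_congr rfl fun j _ => Finset.sum_congr rfl fun ω _ => by ring
      rw [swap]
      have hj : ∀ j, ∑ ω : Fin n → Bool, W ω * (base ω j:ℝ) = t j := by
        intro j
        have hcast : ∀ ω : Fin n → Bool,
            (base ω j : ℝ) = ((fun b => ((cond b ⌈t j⌉₊ ⌊t j⌋₊ : ℕ):ℝ)) (ω j)) := by
          intro ω
          by_cases h : ω j <;> simp [hbasedef, h]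
        calc ∑ ω : Fin n → Bool, W ω * (base ω j:ℝ)
            = ∑ ω : Fin n → Bool, (∏ k, w k (ω k))
                * ((fun b => ((cond b ⌈t j⌉₊ ⌊t j⌋₊ : ℕ):ℝ)) (ω j)) := by
              refine Finset.sum_congr rfl fun ω _ => ?_
              rw [hcast ω, hWdef]
          _ = w j true * ((⌈t j⌉₊:ℕ):ℝ) + w j false * ((⌊t j⌋₊:ℕ):ℝ) :=
              marginal_bool w hw1 j (fun b => ((cond b ⌈t j⌉₊ ⌊t j⌋₊ : ℕ):ℝ))
          _ = p j * (⌈t j⌉₊:ℝ) + (1 - p j) * (⌊t j⌋₊:ℝ) := by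
              simp [hwdef]
          _ = t j := by
              have := pceil (ht0 j)
              simp only [hpdef]
              convert this using 2
      rw [Finset.sum_congr rfl (fun j _ => by rw [hj j])]
      rw [Finset.mul_sum]
      exact Finset.sum_congr rfl fun j _ => by rw [htdef]; ring
    have hfailP : ∀ i, ∑ ω : Fin n → Bool, W ω * (if X i ω < 1 then 1 else 0)
        ≤ α * Real.exp (1 - α) := by
      intro i
      set s0 := Real.log α with hs0def
      have hs0 : 0 ≤ s0 := Real.log_nonneg (by linarith)
      have hes : Real.exp s0 = α := Real.exp_log hα0
      have hesn : Real.exp (-s0) = α⁻¹ := by rw [Real.exp_neg, hes]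
      have h1e0 : 0 ≤ 1 - Real.exp (-s0) := by
        rw [hesn]
        have h : α⁻¹ ≤ 1 := by
          rw [inv_le_one_iff₀]; right; linarith
        linarith
      have hdom : ∀ ω, W ω * (if X i ω < 1 then 1 else 0)
          ≤ W ω * Real.exp (s0 * (1 - X i ω)) := by
        intro ω
        apply mul_le_mul_of_nonneg_left _ (hWnn ω)
        by_cases h : X i ω < 1
        · rw [if_pos h]; apply Real.one_le_exp; nlinarith
        · rw [if_neg h]; positivity
      have hprod : ∀ ω : Fin n → Bool, W ω * Real.exp (s0 * (1 - X i ω))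
          = Real.exp s0 * ∏ j, ((fun b => w j b * Real.exp
              (-(s0 * (A i j * ((cond b ⌈t j⌉₊ ⌊t j⌋₊ : ℕ):ℝ))))) (ω j)) := by
        intro ω
        have hXeq : X i ω = ∑ j, A i j * ((cond (ω j) ⌈t j⌉₊ ⌊t j⌋₊ : ℕ):ℝ) := by
          simp only [hXdef]
          refine Finset.sum_congr rfl fun j _ => ?_
          by_cases h : ω j <;> simp [hbasedef, h]
        have hexpand : Real.exp (s0 * (1 - X i ω))
            = Real.exp s0 * ∏ j, Real.exp (-(s0 * (A i j * ((cond (ω j) ⌈t j⌉₊ ⌊t j⌋₊ : ℕ):ℝ)))) := by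
          rw [← Real.exp_sum, ← Real.exp_add]
          congr 1
          rw [hXeq]
          rw [show ∑ x : Fin n, -(s0 * (A i x * ((cond (ω x) ⌈t x⌉₊ ⌊t x⌋₊ : ℕ):ℝ)))
              = -(s0 * ∑ x : Fin n, A i x * ((cond (ω x) ⌈t x⌉₊ ⌊t x⌋₊ : ℕ):ℝ)) from by
            rw [Finset.mul_sum, ← Finset.sum_neg_distrib]]
          ring
        rw [hexpand, hWdef]
        simp only []
        rw [mul_left_comm, ← Finset.prod_mul_distrib]
      calc ∑ ω : Fin n → Bool, W ω * (if X i ω < 1 then 1 else 0)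
          ≤ ∑ ω : Fin n → Bool, W ω * Real.exp (s0 * (1 - X i ω)) :=
            Finset.sum_le_sum fun ω _ => hdom ω
        _ = ∑ ω : Fin n → Bool, Real.exp s0 * ∏ j, ((fun b => w j b * Real.exp
              (-(s0 * (A i j * ((cond b ⌈t j⌉₊ ⌊t j⌋₊ : ℕ):ℝ))))) (ω j)) :=
            Finset.sum_congr rfl fun ω _ => hprod ω
        _ = Real.exp s0 * ∑ ω : Fin n → Bool, ∏ j, ((fun b => w j b * Real.exp
              (-(s0 * (A i j * ((cond b ⌈t j⌉₊ ⌊t j⌋₊ : ℕ):ℝ))))) (ω j)) := by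
            rw [← Finset.mul_sum]
        _ = Real.exp s0 * ∏ j, (w j true * Real.exp (-(s0 * (A i j * ((⌈t j⌉₊:ℕ):ℝ))))
              + w j false * Real.exp (-(s0 * (A i j * ((⌊t j⌋₊:ℕ):ℝ))))) := by
            rw [sum_pi_bool (fun j b => w j b * Real.exp
              (-(s0 * (A i j * ((cond b ⌈t j⌉₊ ⌊t j⌋₊ : ℕ):ℝ)))))]
            simp only [Bool.cond_true, Bool.cond_false]
        _ ≤ Real.exp s0 * ∏ j, Real.exp (-((1 - Real.exp (-s0)) * (A i j * t j))) := by
            apply mul_le_mul_of_nonneg_left _ (Real.exp_pos s0).le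
            apply Finset.prod_le_prod
            · intro j _
              exact add_nonneg (mul_nonneg (hwnn j true) (Real.exp_pos _).le)
                (mul_nonneg (hwnn j false) (Real.exp_pos _).le)
            · intro j _
              have hfb := factor_bound s0 (A i j) (p j) ((⌊t j⌋₊:ℕ):ℝ) ((⌈t j⌉₊:ℕ):ℝ)
                hs0 (hA i j).1 (hA i j).2 (hp0 j) (hp1 j) (Nat.cast_nonneg _)
                (fun hne => ceil_eq_floor_add_one_of_frac (ht0 j) (by
                  simp only [hpdef] at hne; exact hne))
              have hflp : ((⌊t j⌋₊:ℕ):ℝ) + p j = t j := by simp only [hpdef]; ring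
              rw [hflp] at hfb
              have hwt : w j true = p j := by simp [hwdef]
              have hwf : w j false = 1 - p j := by simp [hwdef]
              rw [hwt, hwf]
              exact hfb
        _ = Real.exp s0 * Real.exp (∑ j, -((1 - Real.exp (-s0)) * (A i j * t j))) := by
            rw [Real.exp_sum]
        _ ≤ Real.exp s0 * Real.exp (-((1 - Real.exp (-s0)) * α)) := by
            apply mul_le_mul_of_nonneg_left _ (Real.exp_pos s0).le
            apply Real.exp_le_exp.mpr
            have hsumneg : ∑ j, -((1 - Real.exp (-s0)) * (A i j * t j))
                = -((1 - Real.exp (-s0)) * ∑ j, A i j * t j) := by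
              rw [Finset.mul_sum, ← Finset.sum_neg_distrib]
            rw [hsumneg]
            have := hrow i
            nlinarith
        _ = α * Real.exp (1 - α) := by
            have harg : -((1 - Real.exp (-s0)) * α) = 1 - α := by
              rw [hesn]; field_simp; ring
            rw [harg, hes]
    have hKsum : ∑ i, K i ≤ 8 * Δ₀ * ∑ j, c j * x j := by
      have hKi : ∀ i, K i ≤ 8 * ∑ j ∈ Finset.univ.filter (fun j => A i j ≠ 0), c j * x j := by
        intro i
        have h := hTcost i
        have hL : 0 ≤ ∑ j ∈ Finset.univ.filter (fun j => A i j ≠ 0), c j * x j :=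
          Finset.sum_nonneg fun j _ => mul_nonneg (hc j) (hx j)
        rw [hKdef]
        nlinarith [hKnn i]
      calc ∑ i, K i
          ≤ ∑ i, 8 * ∑ j ∈ Finset.univ.filter (fun j => A i j ≠ 0), c j * x j :=
            Finset.sum_le_sum fun i _ => hKi i
        _ = 8 * ∑ i, ∑ j ∈ Finset.univ.filter (fun j => A i j ≠ 0), c j * x j := by
            rw [Finset.mul_sum]
        _ ≤ 8 * (Δ₀ * ∑ j, c j * x j) := by
            have hmain : ∑ i, ∑ j ∈ Finset.univ.filter (fun j => A i j ≠ 0), c j * x j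
                ≤ Δ₀ * ∑ j, c j * x j := by
              have h1 : ∀ i : Fin m, ∑ j ∈ Finset.univ.filter (fun j => A i j ≠ 0), c j * x j
                  = ∑ j, (if A i j ≠ 0 then c j * x j else 0) :=
                fun i => (Finset.sum_filter _ _)
              rw [Finset.sum_congr rfl (fun i _ => h1 i), Finset.sum_comm]
              have h2 : ∀ j, (∑ i, if A i j ≠ 0 then c j * x j else 0) ≤ Δ₀ * (c j * x j) := by
                intro j
                have h3 : (∑ i, if A i j ≠ 0 then c j * x j else 0)
                    = ((Finset.univ.filter fun i : Fin m => A i j ≠ 0).card : ℝ) * (c j * x j) := by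
                  rw [← Finset.sum_filter, Finset.sum_const, nsmul_eq_mul]
                rw [h3]
                have hcard : (Finset.univ.filter fun i : Fin m => A i j ≠ 0).card ≤ Δ₀ := by
                  rw [hΔdef]
                  exact Finset.le_sup (f := fun j : Fin n =>
                    (Finset.univ.filter fun i : Fin m => A i j ≠ 0).card) (Finset.mem_univ j)
                have hcard' : ((Finset.univ.filter fun i : Fin m => A i j ≠ 0).card : ℝ) ≤ (Δ₀:ℝ) := by
                  exact_mod_cast hcard
                exact mul_le_mul_of_nonneg_right hcard' (mul_nonneg (hc j) (hx j))
              calc ∑ j, ∑ i, (if A i j ≠ 0 then c j * x j else 0)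
                  ≤ ∑ j, Δ₀ * (c j * x j) := Finset.sum_le_sum fun j _ => h2 j
                _ = Δ₀ * ∑ j, c j * x j := by rw [Finset.mul_sum]
            linarith
        _ = 8 * Δ₀ * ∑ j, c j * x j := by ring
    have hnum : α * Real.exp (1 - α) * (8 * Δ₀) ≤ 100 := by
      have h1 : Real.exp (1 - α) = Real.exp 1 / Real.exp α := by
        rw [Real.exp_sub]
      have he1 : Real.exp 1 ≤ 3 := by
        have := Real.exp_one_lt_d9; linarith
      have he1' : 0 < Real.exp 1 := Real.exp_pos 1
      have he7 : (8:ℝ) ≤ Real.exp 7 := by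
        have := Real.add_one_le_exp (7:ℝ); linarith
      have he8 : Real.exp 8 = Real.exp 7 * Real.exp 1 := by
        rw [← Real.exp_add]; norm_num
      have key : 8 * Real.exp 1 * α * Δ₀ ≤ 100 * (Δ₀ * Real.log Δ₀ * Real.exp 8) := by
        have h2 : 8 * Real.exp 1 * α * Δ₀ ≤ 8 * Real.exp 1 * (14 * Real.log Δ₀) * Δ₀ := by
          have := mul_le_mul_of_nonneg_right hα14 hΔpos.le
          nlinarith
        have h3 : (100:ℝ) * (Δ₀ * Real.log Δ₀ * Real.exp 8)
            = 100 * Δ₀ * Real.log Δ₀ * Real.exp 7 * Real.exp 1 := by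
          rw [he8]; ring
        rw [h3]
        have h4 : 8 * Real.exp 1 * (14 * Real.log Δ₀) * Δ₀
            = 112 * Δ₀ * Real.log Δ₀ * Real.exp 1 := by ring
        rw [h4] at h2
        have h5 : (112:ℝ) * Δ₀ * Real.log Δ₀ * Real.exp 1
            ≤ 100 * Δ₀ * Real.log Δ₀ * Real.exp 7 * Real.exp 1 := by
          have hb : (0:ℝ) ≤ Δ₀ * Real.log Δ₀ * Real.exp 1 :=
            mul_nonneg (mul_nonneg hΔpos.le hlogpos.le) he1'.le
          nlinarith
        linarith
      have hexppos : 0 < Real.exp α := Real.exp_pos α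
      rw [h1]
      rw [div_eq_mul_inv]
      have hfinal : α * (Real.exp 1 * (Real.exp α)⁻¹) * (8 * Δ₀) * Real.exp α
          ≤ 100 * Real.exp α := by
        have hh : α * (Real.exp 1 * (Real.exp α)⁻¹) * (8 * Δ₀) * Real.exp α
            = 8 * Real.exp 1 * α * Δ₀ := by
          field_simp
        rw [hh, hexpα]
        calc 8 * Real.exp 1 * α * Δ₀ ≤ 100 * (Δ₀ * Real.log Δ₀ * Real.exp 8) := key
          _ = 100 * (Δ₀ * Real.log Δ₀ * Real.exp 8) := rfl
      nlinarith [hexppos]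
    calc ∑ ω : Fin n → Bool, W ω * (∑ j, c j * (z ω j : ℝ))
        ≤ ∑ ω : Fin n → Bool, W ω * ((∑ j, c j * (base ω j:ℝ))
            + ∑ i, (if X i ω < 1 then K i else 0)) :=
          Finset.sum_le_sum fun ω _ => mul_le_mul_of_nonneg_left (hpoint ω) (hWnn ω)
      _ = (∑ ω : Fin n → Bool, W ω * (∑ j, c j * (base ω j:ℝ)))
            + ∑ ω : Fin n → Bool, W ω * (∑ i, if X i ω < 1 then K i else 0) := by
          rw [← Finset.sum_add_distrib]
          exact Finset.sum_congr rfl fun ω _ => by ring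
      _ ≤ α * (∑ j, c j * x j) + 100 * (∑ j, c j * x j) := by
          rw [hEbase]
          have hswap : ∑ ω : Fin n → Bool, W ω * (∑ i, if X i ω < 1 then K i else 0)
              = ∑ i, ∑ ω : Fin n → Bool, W ω * (if X i ω < 1 then K i else 0) := by
            simp_rw [Finset.mul_sum]
            exact Finset.sum_comm
          have hfac : ∀ i, ∑ ω : Fin n → Bool, W ω * (if X i ω < 1 then K i else 0)
              = K i * ∑ ω : Fin n → Bool, W ω * (if X i ω < 1 then 1 else 0) := by
            intro i
            rw [Finset.mul_sum]
            refine Finset.sum_congr rfl fun ω _ => ?_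
            by_cases h : X i ω < 1 <;> simp [h] <;> ring
          have hbound : ∑ i, K i * (∑ ω : Fin n → Bool, W ω * (if X i ω < 1 then 1 else 0))
              ≤ ∑ i, K i * (α * Real.exp (1 - α)) :=
            Finset.sum_le_sum fun i _ => mul_le_mul_of_nonneg_left (hfailP i) (hKnn i)
          have h2 : ∑ i, K i * (α * Real.exp (1-α))
              = (α * Real.exp (1-α)) * ∑ i, K i := by
            rw [← Finset.sum_mul]; ring
          have hexp_nn : 0 ≤ α * Real.exp (1-α) := by positivity
          have h3 : (α * Real.exp (1-α)) * (∑ i, K i)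
              ≤ (α * Real.exp (1-α)) * (8 * Δ₀ * ∑ j, c j * x j) :=
            mul_le_mul_of_nonneg_left hKsum hexp_nn
          have h4 : (α * Real.exp (1-α)) * (8 * Δ₀ * ∑ j, c j * x j)
              = (α * Real.exp (1-α) * (8 * Δ₀)) * ∑ j, c j * x j := by ring
          have h5 : (α * Real.exp (1-α) * (8 * Δ₀)) * (∑ j, c j * x j)
              ≤ 100 * ∑ j, c j * x j := mul_le_mul_of_nonneg_right hnum hcx
          have h6 : ∑ ω : Fin n → Bool, W ω * (∑ i, if X i ω < 1 then K i else 0)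
              ≤ 100 * ∑ j, c j * x j := by
            rw [hswap, Finset.sum_congr rfl fun i _ => hfac i]
            calc ∑ i, K i * (∑ ω : Fin n → Bool, W ω * (if X i ω < 1 then 1 else 0))
                ≤ ∑ i, K i * (α * Real.exp (1-α)) := hbound
              _ = (α * Real.exp (1-α)) * ∑ i, K i := h2
              _ ≤ 100 * ∑ j, c j * x j := by linarith
          linarith
      _ = (α + 100) * ∑ j, c j * x j := by ring
  -- assemble
  refine ⟨Fin n → Bool, ⟨μ⟩, z, hμprob, measurable_from_top, ?_, ?_⟩
  · exact Filter.Eventually.of_forall fun ω => ⟨hfeas ω, hzle ω⟩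
  · have hlint : ∫⁻ ω, ENNReal.ofReal (∑ j, c j * (z ω j : ℝ)) ∂μ
        = ENNReal.ofReal (∑ ω : Fin n → Bool, W ω * (∑ j, c j * (z ω j : ℝ))) := by
      rw [hμdef, MeasureTheory.lintegral_sum_measure, tsum_fintype]
      have h1 : ∀ ω : Fin n → Bool,
          ∫⁻ a, ENNReal.ofReal (∑ j, c j * (z a j : ℝ))
            ∂((ENNReal.ofReal (W ω)) • Measure.dirac ω)
          = ENNReal.ofReal (W ω * (∑ j, c j * (z ω j : ℝ))) := by
        intro ω
        rw [lintegral_smul_measure, lintegral_dirac' _ measurable_from_top,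
          smul_eq_mul, ← ENNReal.ofReal_mul (hWnn ω)]
      rw [Finset.sum_congr rfl (fun ω _ => h1 ω),
        ← ENNReal.ofReal_sum_of_nonneg]
      intro ω _
      exact mul_nonneg (hWnn ω) (Finset.sum_nonneg fun j _ =>
        mul_nonneg (hc j) (Nat.cast_nonneg _))
    calc ∫⁻ ω, ENNReal.ofReal (∑ j, c j * (z ω j : ℝ)) ∂μ
        = ENNReal.ofReal (∑ ω : Fin n → Bool, W ω * (∑ j, c j * (z ω j : ℝ))) := hlint
      _ ≤ ENNReal.ofReal ((α + 100) * ∑ j, c j * x j) := ENNReal.ofReal_le_ofReal hEmain
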